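/- Let A₁, …, A_m be Hermitian n×n matrices and 1 ≤ r ≤ n. For z ∈ ℂ^{n×r} of rank k > 0, let T_z = {W ∈ ℂ^{n×n} : W* = W, P⊥ W P⊥ = 0} where P⊥ is the orthogonal projection onto Ran(z)^⊥, and define a(z) = min { Σ_{j=1}^m ⟨W, A_j⟩_ℝ² : W ∈ T_z, ‖W‖₂ = 1 }. Define also the local constants a₁(z) = lim_{R→0} inf { Σ_j ⟨x x* − z z*, A_j⟩_ℝ² / ‖x x* − z z*‖₂² : x ∈ ℂ^{n×r}, 0 < ‖x x* − z z*‖₂ < R } and a₂(z) = lim_{R→0} inf { Σ_j ⟨x x* − y y*, A_j⟩_ℝ² / ‖x x* − y y*‖₂² : x, y ∈ ℂ^{n×r}, ‖x x* − z z*‖₂ < R, ‖y y* − z z*‖₂ < R, x x* ≠ y y* }. Then a₀ ≤ a₂(z) ≤ a₁(z) ≤ a(z) for every z ≠ 0, and a₀ = inf_{z ∈ ℂ^{n×r}, z ≠ 0} a(z), where a₀ = inf { Σ_j ⟨x x* − y y*, A_j⟩_ℝ² / ‖x x* − y y*‖₂² : x x* ≠ y y* }. -/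

import Mathlib

open Matrix Filter
open scoped ComplexOrder

/-- The old `Matrix.PosSemidef.sqrt` (removed from Mathlib), with its old definition. -/
noncomputable def psdSqrtOld {k : ℕ} {A : Matrix (Fin k) (Fin k) ℂ} (hA : A.PosSemidef) :
    Matrix (Fin k) (Fin k) ℂ :=
  hA.1.eigenvectorUnitary.1 * diagonal ((↑) ∘ (√·) ∘ hA.1.eigenvalues) *
    (star hA.1.eigenvectorUnitary : Matrix (Fin k) (Fin k) ℂ)

noncomputable def frob {p q : ℕ} (x : Matrix (Fin p) (Fin q) ℂ) : ℝ :=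
  Real.sqrt (Matrix.trace (xᴴ * x)).re

noncomputable def rinner {p q : ℕ} (X Y : Matrix (Fin p) (Fin q) ℂ) : ℝ :=
  (Matrix.trace (Xᴴ * Y)).re

noncomputable def nuclear {p q : ℕ} (x : Matrix (Fin p) (Fin q) ℂ) : ℝ :=
  (Matrix.trace (psdSqrtOld (Matrix.posSemidef_conjTranspose_mul_self x))).re

noncomputable def theta {n r : ℕ} (x : Matrix (Fin n) (Fin r) ℂ) : Matrix (Fin n) (Fin n) ℂ :=
  psdSqrtOld (Matrix.posSemidef_self_mul_conjTranspose x)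

noncomputable def psi {n r : ℕ} (x : Matrix (Fin n) (Fin r) ℂ) : Matrix (Fin n) (Fin n) ℂ :=
  frob x • theta x

noncomputable def Dmet {n r : ℕ} (x y : Matrix (Fin n) (Fin r) ℂ) : ℝ :=
  ⨅ U : Matrix.unitaryGroup (Fin r) ℂ, frob (x - y * (U : Matrix (Fin r) (Fin r) ℂ))

noncomputable def dmet {n r : ℕ} (x y : Matrix (Fin n) (Fin r) ℂ) : ℝ :=
  ⨅ U : Matrix.unitaryGroup (Fin r) ℂ,
    frob (x - y * (U : Matrix (Fin r) (Fin r) ℂ)) * frob (x + y * (U : Matrix (Fin r) (Fin r) ℂ))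


/-- Membership of a Hermitian `W` in the tangent space
`T_z = {W : W* = W, P⊥ W P⊥ = 0}`, where `P⊥` is the orthogonal projection onto
`Ran(z)^⊥`: for all `u, v ⊥ Ran(z)` (i.e. `z* u = 0`, `z* v = 0`) one has `u* W v = 0`. -/
def tangentCond {n r : ℕ} (z : Matrix (Fin n) (Fin r) ℂ)
    (W : Matrix (Fin n) (Fin n) ℂ) : Prop :=
  Wᴴ = W ∧ ∀ u v : Fin n → ℂ, zᴴ *ᵥ u = 0 → zᴴ *ᵥ v = 0 → star u ⬝ᵥ (W *ᵥ v) = 0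

/-- The squared global lower Lipschitz constant `a₀` of the `β` analysis map. -/
noncomputable def aGlobal {n m : ℕ} (r : ℕ) (A : Fin m → Matrix (Fin n) (Fin n) ℂ) : ℝ :=
  sInf {t : ℝ | ∃ x y : Matrix (Fin n) (Fin r) ℂ, x * xᴴ ≠ y * yᴴ ∧
    t = (∑ j, rinner (x * xᴴ - y * yᴴ) (A j) ^ 2) / frob (x * xᴴ - y * yᴴ) ^ 2}

/-- The geometric local lower bound
`a(z) = min {Σ_j ⟨W, A_j⟩_ℝ² : W ∈ T_z, ‖W‖₂ = 1}`. -/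
noncomputable def aGeo {n r m : ℕ} (A : Fin m → Matrix (Fin n) (Fin n) ℂ)
    (z : Matrix (Fin n) (Fin r) ℂ) : ℝ :=
  sInf {t : ℝ | ∃ W : Matrix (Fin n) (Fin n) ℂ,
    tangentCond z W ∧ frob W = 1 ∧ t = ∑ j, rinner W (A j) ^ 2}

/-- The local lower bound `a₁(z)` (type I), expressed as the monotone limit (supremum
over radii `R > 0`) of the local infima. -/
noncomputable def aLoc1 {n r m : ℕ} (A : Fin m → Matrix (Fin n) (Fin n) ℂ)
    (z : Matrix (Fin n) (Fin r) ℂ) : ℝ :=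
  ⨆ R : {R : ℝ // 0 < R}, sInf {t : ℝ | ∃ x : Matrix (Fin n) (Fin r) ℂ,
    0 < frob (x * xᴴ - z * zᴴ) ∧ frob (x * xᴴ - z * zᴴ) < R.1 ∧
    t = (∑ j, rinner (x * xᴴ - z * zᴴ) (A j) ^ 2) / frob (x * xᴴ - z * zᴴ) ^ 2}

/-- The local lower bound `a₂(z)` (type II), expressed as the monotone limit (supremum
over radii `R > 0`) of the local infima. -/
noncomputable def aLoc2 {n r m : ℕ} (A : Fin m → Matrix (Fin n) (Fin n) ℂ)
    (z : Matrix (Fin n) (Fin r) ℂ) : ℝ :=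
  ⨆ R : {R : ℝ // 0 < R}, sInf {t : ℝ | ∃ x y : Matrix (Fin n) (Fin r) ℂ,
    frob (x * xᴴ - z * zᴴ) < R.1 ∧ frob (y * yᴴ - z * zᴴ) < R.1 ∧ x * xᴴ ≠ y * yᴴ ∧
    t = (∑ j, rinner (x * xᴴ - y * yᴴ) (A j) ^ 2) / frob (x * xᴴ - y * yᴴ) ^ 2}


/-! ### Auxiliary development -/

noncomputable def toE {p q : ℕ} (X : Matrix (Fin p) (Fin q) ℂ) :
    EuclideanSpace ℂ (Fin p × Fin q) :=
  (WithLp.equiv 2 _).symm (fun ij => X ij.1 ij.2)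

lemma toE_add {p q : ℕ} (X Y : Matrix (Fin p) (Fin q) ℂ) : toE (X + Y) = toE X + toE Y := rfl
lemma toE_smul {p q : ℕ} (c : ℂ) (X : Matrix (Fin p) (Fin q) ℂ) : toE (c • X) = c • toE X := rfl
lemma toE_zero {p q : ℕ} : toE (0 : Matrix (Fin p) (Fin q) ℂ) = 0 := rfl

lemma toE_inj {p q : ℕ} {X Y : Matrix (Fin p) (Fin q) ℂ} (h : toE X = toE Y) : X = Y := by
  ext i j
  exact congrFun (congrArg (WithLp.equiv 2 _) h) (i, j)

lemma trace_conjTranspose_mul {p q : ℕ} (X Y : Matrix (Fin p) (Fin q) ℂ) :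
    Matrix.trace (Xᴴ * Y) = ∑ ij : Fin p × Fin q, (starRingEnd ℂ) (X ij.1 ij.2) * Y ij.1 ij.2 := by
  rw [Matrix.trace, Fintype.sum_prod_type]
  rw [Finset.sum_comm]
  apply Finset.sum_congr rfl
  intro j _
  simp [Matrix.diag, Matrix.mul_apply, Matrix.conjTranspose_apply]

lemma rinner_eq {p q : ℕ} (X Y : Matrix (Fin p) (Fin q) ℂ) :
    rinner X Y = (inner ℂ (toE X) (toE Y) : ℂ).re := by
  rw [rinner, trace_conjTranspose_mul, PiLp.inner_apply]
  congr 1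
  apply Finset.sum_congr rfl
  intro ij _
  simp [toE, mul_comm]

lemma frob_eq {p q : ℕ} (X : Matrix (Fin p) (Fin q) ℂ) : frob X = ‖toE X‖ := by
  rw [frob, EuclideanSpace.norm_eq]
  congr 1
  rw [trace_conjTranspose_mul, Complex.re_sum]
  apply Finset.sum_congr rfl
  intro ij _
  rw [show ((starRingEnd ℂ) (X ij.1 ij.2) * X ij.1 ij.2) = (Complex.normSq (X ij.1 ij.2) : ℂ) by
    rw [← Complex.normSq_eq_conj_mul_self]]
  rw [Complex.ofReal_re, ← Complex.sq_norm]
  rfl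

lemma frob_nonneg {p q : ℕ} (X : Matrix (Fin p) (Fin q) ℂ) : 0 ≤ frob X := by
  rw [frob_eq]; exact norm_nonneg _

lemma frob_eq_zero_iff {p q : ℕ} {X : Matrix (Fin p) (Fin q) ℂ} : frob X = 0 ↔ X = 0 := by
  rw [frob_eq, norm_eq_zero]
  constructor
  · intro h; exact toE_inj (by rw [h, toE_zero])
  · rintro rfl; exact toE_zero

lemma frob_pos {p q : ℕ} {X : Matrix (Fin p) (Fin q) ℂ} (h : X ≠ 0) : 0 < frob X :=
  lt_of_le_of_ne (frob_nonneg X) (fun e => h (frob_eq_zero_iff.mp e.symm))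

lemma frob_smul_real {p q : ℕ} (c : ℝ) (X : Matrix (Fin p) (Fin q) ℂ) :
    frob ((c : ℂ) • X) = |c| * frob X := by
  rw [frob_eq, toE_smul, norm_smul, frob_eq, Complex.norm_real, Real.norm_eq_abs]

lemma rinner_smul_real {p q : ℕ} (c : ℝ) (X Y : Matrix (Fin p) (Fin q) ℂ) :
    rinner ((c : ℂ) • X) Y = c * rinner X Y := by
  rw [rinner_eq, toE_smul, inner_smul_left, rinner_eq]
  simp

lemma rinner_sq_le {p q : ℕ} (X Y : Matrix (Fin p) (Fin q) ℂ) :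
    rinner X Y ^ 2 ≤ frob X ^ 2 * frob Y ^ 2 := by
  rw [rinner_eq, frob_eq, frob_eq, ← mul_pow]
  have h1 : |(inner ℂ (toE X) (toE Y) : ℂ).re| ≤ ‖toE X‖ * ‖toE Y‖ := by
    refine le_trans ?_ (norm_inner_le_norm (𝕜 := ℂ) (toE X) (toE Y))
    exact Complex.abs_re_le_norm _
  calc (inner ℂ (toE X) (toE Y) : ℂ).re ^ 2 = |(inner ℂ (toE X) (toE Y) : ℂ).re| ^ 2 := (sq_abs _).symm
    _ ≤ (‖toE X‖ * ‖toE Y‖) ^ 2 := by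
        apply pow_le_pow_left₀ (abs_nonneg _) h1

lemma toEuclideanLin_apply_piLp_equiv_symm' {p q : ℕ} (M : Matrix (Fin p) (Fin q) ℂ)
    (v : Fin q → ℂ) : Matrix.toEuclideanLin M ((WithLp.equiv 2 (Fin q → ℂ)).symm v) =
      (WithLp.equiv 2 (Fin p → ℂ)).symm (M *ᵥ v) :=
  Matrix.toEuclideanLin_apply_piLp_toLp M v

lemma tangent_decomp {n r : ℕ} (z : Matrix (Fin n) (Fin r) ℂ) (W : Matrix (Fin n) (Fin n) ℂ)
    (hW : tangentCond z W) : ∃ V : Matrix (Fin n) (Fin r) ℂ, z * Vᴴ + V * zᴴ = W := by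
  classical
  set E := EuclideanSpace ℂ (Fin n)
  set L : EuclideanSpace ℂ (Fin r) →ₗ[ℂ] E := Matrix.toEuclideanLin z with hL
  set K : Submodule ℂ E := LinearMap.range L with hK
  set Pc : E →L[ℂ] E := K.subtypeL ∘L K.orthogonalProjectionOnto with hPc
  set P : Matrix (Fin n) (Fin n) ℂ := Matrix.toEuclideanLin.symm (Pc : E →ₗ[ℂ] E) with hPdef
  have hPlin : Matrix.toEuclideanLin P = (Pc : E →ₗ[ℂ] E) := by
    rw [hPdef]; exact Matrix.toEuclideanLin.apply_symm_apply _
  -- mulVec of P equals Pc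
  have hPmv : ∀ u : Fin n → ℂ, P *ᵥ u =
      WithLp.equiv 2 (Fin n → ℂ) (Pc ((WithLp.equiv 2 (Fin n → ℂ)).symm u)) := by
    intro u
    have h1 := toEuclideanLin_apply_piLp_equiv_symm' P u
    rw [hPlin] at h1
    have h2 := congrArg (WithLp.equiv 2 (Fin n → ℂ)) h1
    simpa using h2.symm
  -- P is Hermitian
  have hPH : Pᴴ = P := by
    apply Matrix.toEuclideanLin.injective
    rw [Matrix.toEuclideanLin_conjTranspose_eq_adjoint, hPlin]
    have hsym : (Pc : E →ₗ[ℂ] E).IsSymmetric := Submodule.starProjection_isSymmetric (K := K)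
    have := (LinearMap.isSymmetric_iff_isSelfAdjoint (Pc : E →ₗ[ℂ] E)).mp hsym
    rw [← LinearMap.star_eq_adjoint]
    exact this
  -- P fixes elements of K (as mulVec)
  have hPfix : ∀ w : Fin r → ℂ, P *ᵥ (z *ᵥ w) = z *ᵥ w := by
    intro w
    rw [hPmv]
    have hmem : ((WithLp.equiv 2 (Fin n → ℂ)).symm (z *ᵥ w)) ∈ K := by
      rw [hK]
      exact ⟨(WithLp.equiv 2 (Fin r → ℂ)).symm w,
        (toEuclideanLin_apply_piLp_equiv_symm' z w)⟩
    have : Pc ((WithLp.equiv 2 (Fin n → ℂ)).symm (z *ᵥ w))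
        = (WithLp.equiv 2 (Fin n → ℂ)).symm (z *ᵥ w) := by
      rw [hPc]
      exact Submodule.starProjection_eq_self_iff (K := K) |>.mpr hmem
    rw [this]; simp
  -- P * z = z
  have hPz : P * z = z := by
    ext i j
    have h := congrFun (hPfix (Pi.single j 1)) i
    simp only [Matrix.mulVec_single, mul_one] at h
    rw [Matrix.mul_apply]
    simpa [Matrix.mulVec, dotProduct] using h
  obtain ⟨hWH, htan⟩ := hW
  have hzP : zᴴ * P = zᴴ := by
    have := congrArg Matrix.conjTranspose hPz
    rwa [Matrix.conjTranspose_mul, hPH] at this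
  have hz1P : zᴴ * (1 - P) = 0 := by
    rw [Matrix.mul_sub, Matrix.mul_one, hzP, sub_self]
  have h1P : (1 - P)ᴴ = 1 - P := by
    rw [Matrix.conjTranspose_sub, hPH, Matrix.conjTranspose_one]
  have entry_eq : ∀ (M : Matrix (Fin n) (Fin n) ℂ) (i j : Fin n),
      M i j = Pi.single i 1 ⬝ᵥ (M *ᵥ Pi.single j 1) := by
    intro M i j
    simp [Matrix.mulVec_single, single_dotProduct]
  have hperp : (1 - P) * W * (1 - P) = 0 := by
    ext i j
    set u : Fin n → Fin n → ℂ := fun i => (1 - P) *ᵥ Pi.single i 1 with hu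
    have hucol : ∀ i, zᴴ *ᵥ u i = 0 := by
      intro i; rw [hu, Matrix.mulVec_mulVec, hz1P, Matrix.zero_mulVec]
    have h0 := htan (u i) (u j) (hucol i) (hucol j)
    have hstar : star (u i) = Pi.single i 1 ᵥ* (1 - P) := by
      funext k
      have h2 : (1 - P) i k = star ((1 - P) k i) := by
        rw [← h1P, Matrix.conjTranspose_apply, h1P]
      simp [hu, Matrix.mulVec_single, Matrix.single_vecMul, h2]
    calc ((1 - P) * W * (1 - P)) i j
        = Pi.single i 1 ⬝ᵥ (((1 - P) * W * (1 - P)) *ᵥ Pi.single j 1) := entry_eq _ i j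
      _ = Pi.single i 1 ⬝ᵥ ((1 - P) *ᵥ (W *ᵥ u j)) := by
          rw [hu, ← Matrix.mulVec_mulVec, ← Matrix.mulVec_mulVec]
      _ = star (u i) ⬝ᵥ (W *ᵥ u j) := by
          rw [hstar, ← Matrix.dotProduct_mulVec]
      _ = 0 := h0
  set Q : Matrix (Fin n) (Fin n) ℂ := (1/2 : ℂ) • P + (1 - P) with hQ
  set N : Matrix (Fin n) (Fin n) ℂ := P * (W * Q) with hN
  have hQH : Qᴴ = Q := by
    rw [hQ, Matrix.conjTranspose_add, Matrix.conjTranspose_smul, hPH, h1P]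
    norm_num
  have hNH : Nᴴ = Q * W * P := by
    rw [hN, Matrix.conjTranspose_mul, Matrix.conjTranspose_mul, hQH, hWH, hPH, Matrix.mul_assoc]
  have hNsum : N + Nᴴ = W := by
    rw [hN, hNH, hQ]
    have expand : (1 - P) * W * (1 - P) = W - P * W - W * P + P * W * P := by
      noncomm_ring
    have h2 : P * W + W * P - P * W * P = W := by
      rw [expand] at hperp
      have := sub_eq_zero.mpr hperp.symm
      linear_combination (norm := noncomm_ring) -hperp
    calc P * (W * ((1/2 : ℂ) • P + (1 - P))) + ((1/2 : ℂ) • P + (1 - P)) * W * P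
        = P * W + W * P - P * W * P := by
          simp only [Matrix.mul_add, Matrix.add_mul, Matrix.mul_smul, Matrix.smul_mul,
            Matrix.mul_sub, Matrix.sub_mul, Matrix.mul_one, Matrix.one_mul]
          rw [← Matrix.mul_assoc]
          module
      _ = W := h2
  -- columns of N are in the range of z
  have hcol : ∀ j : Fin n, ∃ c : Fin r → ℂ, z *ᵥ c = N *ᵥ Pi.single j 1 := by
    intro j
    have hNe : N *ᵥ Pi.single j 1 = P *ᵥ ((W * Q) *ᵥ Pi.single j 1) := by
      rw [hN, ← Matrix.mulVec_mulVec]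
    set w := (W * Q) *ᵥ Pi.single j 1 with hw
    have hmem : Pc ((WithLp.equiv 2 (Fin n → ℂ)).symm w) ∈ K := by
      rw [hPc]
      exact Submodule.coe_mem _
    obtain ⟨y, hy⟩ : ∃ y, L y = Pc ((WithLp.equiv 2 (Fin n → ℂ)).symm w) := hmem
    refine ⟨WithLp.equiv 2 (Fin r → ℂ) y, ?_⟩
    have h3 := toEuclideanLin_apply_piLp_equiv_symm' z (WithLp.equiv 2 (Fin r → ℂ) y)
    have h4 : (WithLp.equiv 2 (Fin r → ℂ)).symm (WithLp.equiv 2 (Fin r → ℂ) y) = y := by simp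
    rw [h4] at h3
    rw [hNe, hPmv]
    have h5 := congrArg (WithLp.equiv 2 (Fin n → ℂ)) h3
    simp only [Equiv.apply_symm_apply] at h5
    rw [← hL, hy] at h5
    exact h5.symm
  set B : Matrix (Fin r) (Fin n) ℂ := Matrix.of fun k j => Classical.choose (hcol j) k with hB
  have hzB : z * B = N := by
    ext i j
    have hspec := congrFun (Classical.choose_spec (hcol j)) i
    have hspec2 : (z *ᵥ Classical.choose (hcol j)) i = N i j := by
      simpa [Matrix.mulVec_single] using hspec
    rw [Matrix.mul_apply, ← hspec2, Matrix.mulVec, dotProduct]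
    rfl
  refine ⟨Bᴴ, ?_⟩
  rw [Matrix.conjTranspose_conjTranspose, hzB]
  have : Bᴴ * zᴴ = Nᴴ := by rw [← Matrix.conjTranspose_mul, hzB]
  rw [this, hNsum]

-- the limit lemma
lemma loc1_le_tangent {n r m : ℕ} (A : Fin m → Matrix (Fin n) (Fin n) ℂ)
    (z : Matrix (Fin n) (Fin r) ℂ) (W : Matrix (Fin n) (Fin n) ℂ)
    (hW : tangentCond z W) (hW1 : frob W = 1) (R : ℝ) (hR : 0 < R) :
    sInf {t : ℝ | ∃ x : Matrix (Fin n) (Fin r) ℂ,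
      0 < frob (x * xᴴ - z * zᴴ) ∧ frob (x * xᴴ - z * zᴴ) < R ∧
      t = (∑ j, rinner (x * xᴴ - z * zᴴ) (A j) ^ 2) / frob (x * xᴴ - z * zᴴ) ^ 2}
    ≤ ∑ j, rinner W (A j) ^ 2 := by
  classical
  obtain ⟨V, hV⟩ := tangent_decomp z W hW
  set S := {t : ℝ | ∃ x : Matrix (Fin n) (Fin r) ℂ,
      0 < frob (x * xᴴ - z * zᴴ) ∧ frob (x * xᴴ - z * zᴴ) < R ∧
      t = (∑ j, rinner (x * xᴴ - z * zᴴ) (A j) ^ 2) / frob (x * xᴴ - z * zᴴ) ^ 2} with hS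
  set Cm := V * Vᴴ with hCm
  have hDt : ∀ t : ℝ, (z + (t:ℂ) • V) * (z + (t:ℂ) • V)ᴴ - z * zᴴ
      = (t:ℂ) • (W + (t:ℂ) • Cm) := by
    intro t
    have hct : ((t:ℂ) • V)ᴴ = (t:ℂ) • Vᴴ := by
      rw [Matrix.conjTranspose_smul, Complex.star_def, Complex.conj_ofReal]
    rw [Matrix.conjTranspose_add, hct, ← hV, hCm]
    simp only [Matrix.add_mul, Matrix.mul_add, Matrix.smul_mul, Matrix.mul_smul, smul_add,
      smul_smul]
    abel_nf
  set ψ : ℝ → EuclideanSpace ℂ (Fin n × Fin n) := fun t => toE W + (t:ℂ) • toE Cm with hψ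
  have hψc : Continuous ψ := by
    apply continuous_const.add
    exact (Complex.continuous_ofReal.smul continuous_const)
  have hψ0 : ψ 0 = toE W := by simp [hψ]
  set G : EuclideanSpace ℂ (Fin n × Fin n) → ℝ :=
    fun v => (∑ j, ((inner ℂ v (toE (A j)) : ℂ).re) ^ 2) / ‖v‖ ^ 2 with hG
  have hnormW : ‖toE W‖ = 1 := by rw [← frob_eq, hW1]
  have hGc : ContinuousAt G (toE W) := by
    apply ContinuousAt.div
    · exact (continuous_finset_sum _ (fun j _ =>
        ((Complex.continuous_re.comp (continuous_id.inner continuous_const)).pow 2))).continuousAt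
    · exact (continuous_norm.pow 2).continuousAt
    · rw [hnormW]; norm_num
  have h1 : Tendsto ψ (nhdsWithin 0 (Set.Ioi 0)) (nhds (toE W)) := by
    rw [← hψ0]
    exact (hψc.continuousAt).mono_left nhdsWithin_le_nhds
  have htend : Tendsto (fun t => G (ψ t)) (nhdsWithin 0 (Set.Ioi 0)) (nhds (G (toE W))) :=
    hGc.tendsto.comp h1
  have hGW : G (toE W) = ∑ j, rinner W (A j) ^ 2 := by
    rw [hG]
    simp only [hnormW, one_pow, div_one]
    apply Finset.sum_congr rfl
    intro j _
    rw [rinner_eq]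
  have hbddS : BddBelow S := by
    refine ⟨0, fun t ht => ?_⟩
    obtain ⟨x, _, _, rfl⟩ := ht
    positivity
  have hn : Tendsto (fun t => ‖ψ t‖) (nhdsWithin 0 (Set.Ioi 0)) (nhds 1) := by
    rw [← hnormW]
    exact h1.norm
  have hev1 : ∀ᶠ t in nhdsWithin 0 (Set.Ioi 0), 1/2 < ‖ψ t‖ :=
    hn.eventually (eventually_gt_nhds (by norm_num))
  have hev2 : ∀ᶠ t in nhdsWithin 0 (Set.Ioi 0), ‖ψ t‖ < 2 :=
    hn.eventually (eventually_lt_nhds (by norm_num))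
  have hev3 : ∀ᶠ t in nhdsWithin (0:ℝ) (Set.Ioi 0), t < R/2 :=
    Filter.Eventually.filter_mono nhdsWithin_le_nhds (gt_mem_nhds (half_pos hR))
  have hev4 : ∀ᶠ t in nhdsWithin (0:ℝ) (Set.Ioi 0), 0 < t := by
    filter_upwards [self_mem_nhdsWithin] with t ht using ht
  have hkey : ∀ᶠ t in nhdsWithin (0:ℝ) (Set.Ioi 0), sInf S ≤ G (ψ t) := by
    filter_upwards [hev1, hev2, hev3, hev4] with t h12 h2 h3 h0
    set x := z + (t:ℂ) • V with hx
    have hD : x * xᴴ - z * zᴴ = (t:ℂ) • (W + (t:ℂ) • Cm) := hDt t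
    have htoE : toE (W + (t:ℂ) • Cm) = ψ t := by rw [toE_add, toE_smul]
    have hfD : frob (x * xᴴ - z * zᴴ) = t * ‖ψ t‖ := by
      rw [hD, frob_smul_real, abs_of_pos h0, frob_eq, htoE]
    have hψpos : 0 < ‖ψ t‖ := lt_trans (by norm_num) h12
    have hfpos : 0 < frob (x * xᴴ - z * zᴴ) := by
      rw [hfD]; positivity
    have hflt : frob (x * xᴴ - z * zᴴ) < R := by
      rw [hfD]
      calc t * ‖ψ t‖ < (R/2) * 2 := by
            apply mul_lt_mul'' h3 h2 (le_of_lt h0) (norm_nonneg _)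
        _ = R := by ring
    have hmem : (∑ j, rinner (x * xᴴ - z * zᴴ) (A j) ^ 2) /
        frob (x * xᴴ - z * zᴴ) ^ 2 ∈ S := ⟨x, hfpos, hflt, rfl⟩
    refine le_trans (csInf_le hbddS hmem) (le_of_eq ?_)
    have hrin : ∀ j, rinner (x * xᴴ - z * zᴴ) (A j)
        = t * ((inner ℂ (ψ t) (toE (A j)) : ℂ).re) := by
      intro j
      rw [hD, rinner_smul_real, rinner_eq, htoE]
    have hnum : (∑ j, rinner (x * xᴴ - z * zᴴ) (A j) ^ 2)
        = t ^ 2 * ∑ j, ((inner ℂ (ψ t) (toE (A j)) : ℂ).re) ^ 2 := by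
      rw [Finset.mul_sum]
      apply Finset.sum_congr rfl
      intro j _
      rw [hrin j, mul_pow]
    rw [hnum, hfD, mul_pow, hG]
    exact mul_div_mul_left _ _ (pow_ne_zero 2 (ne_of_gt h0))
  have := ge_of_tendsto htend hkey
  rwa [hGW] at this

lemma quot_le_C {n m : ℕ} (A : Fin m → Matrix (Fin n) (Fin n) ℂ)
    {X : Matrix (Fin n) (Fin n) ℂ} (hX : X ≠ 0) :
    (∑ j, rinner X (A j) ^ 2) / frob X ^ 2 ≤ ∑ j, frob (A j) ^ 2 := by
  rw [div_le_iff₀ (pow_pos (frob_pos hX) 2)]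
  rw [Finset.sum_mul]
  apply Finset.sum_le_sum
  intro j _
  calc rinner X (A j) ^ 2 ≤ frob X ^ 2 * frob (A j) ^ 2 := rinner_sq_le X (A j)
    _ = frob (A j) ^ 2 * frob X ^ 2 := by ring

-- nonemptiness of the S1 set
lemma S1_nonempty {n r m : ℕ} (A : Fin m → Matrix (Fin n) (Fin n) ℂ)
    {z : Matrix (Fin n) (Fin r) ℂ} (hz : z ≠ 0) {R : ℝ} (hR : 0 < R) :
    ∃ t : ℝ, ∃ x : Matrix (Fin n) (Fin r) ℂ,
      0 < frob (x * xᴴ - z * zᴴ) ∧ frob (x * xᴴ - z * zᴴ) < R ∧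
      t = (∑ j, rinner (x * xᴴ - z * zᴴ) (A j) ^ 2) / frob (x * xᴴ - z * zᴴ) ^ 2 := by
  have hzz : z * zᴴ ≠ 0 := fun h => hz (Matrix.self_mul_conjTranspose_eq_zero.mp h)
  set s0 := frob (z * zᴴ) with hs0
  have hs0p : 0 < s0 := frob_pos hzz
  set ε : ℝ := min 1 (R / (2 * s0)) with hε
  have hεp : 0 < ε := lt_min one_pos (by positivity)
  set c : ℝ := Real.sqrt (1 + ε) with hc
  set x : Matrix (Fin n) (Fin r) ℂ := (c:ℂ) • z with hxd
  have hxx : x * xᴴ = ((1 + ε : ℝ) : ℂ) • (z * zᴴ) := by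
    rw [hxd, Matrix.conjTranspose_smul, Matrix.smul_mul, Matrix.mul_smul, smul_smul,
      Complex.star_def, Complex.conj_ofReal, ← Complex.ofReal_mul, hc,
      Real.mul_self_sqrt (by linarith)]
  have hdiff : x * xᴴ - z * zᴴ = ((ε : ℝ) : ℂ) • (z * zᴴ) := by
    rw [hxx]
    have : ((1 + ε : ℝ) : ℂ) = 1 + (ε : ℂ) := by push_cast; ring
    rw [this, add_smul, one_smul, add_sub_cancel_left]
  have hfd : frob (x * xᴴ - z * zᴴ) = ε * s0 := by
    rw [hdiff, frob_smul_real, abs_of_pos hεp, hs0]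
  refine ⟨_, x, ?_, ?_, rfl⟩
  · rw [hfd]; positivity
  · rw [hfd]
    calc ε * s0 ≤ (R / (2 * s0)) * s0 := by
          apply mul_le_mul_of_nonneg_right (min_le_right _ _) (le_of_lt hs0p)
      _ = R / 2 := by field_simp
      _ < R := by linarith

section chains
variable {n r m : ℕ} (A : Fin m → Matrix (Fin n) (Fin n) ℂ) (z : Matrix (Fin n) (Fin r) ℂ)

lemma ne_zero_of_frob_pos {p q : ℕ} {X : Matrix (Fin p) (Fin q) ℂ} (h : 0 < frob X) : X ≠ 0 :=
  fun e => by rw [e] at h; rw [frob_eq_zero_iff.mpr rfl] at h; exact lt_irrefl 0 h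

-- S1 ⊆ S2 pointwise in R
lemma S1_subset_S2 (R : ℝ) :
    {t : ℝ | ∃ x : Matrix (Fin n) (Fin r) ℂ,
      0 < frob (x * xᴴ - z * zᴴ) ∧ frob (x * xᴴ - z * zᴴ) < R ∧
      t = (∑ j, rinner (x * xᴴ - z * zᴴ) (A j) ^ 2) / frob (x * xᴴ - z * zᴴ) ^ 2} ⊆
    {t : ℝ | ∃ x y : Matrix (Fin n) (Fin r) ℂ,
      frob (x * xᴴ - z * zᴴ) < R ∧ frob (y * yᴴ - z * zᴴ) < R ∧ x * xᴴ ≠ y * yᴴ ∧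
      t = (∑ j, rinner (x * xᴴ - y * yᴴ) (A j) ^ 2) / frob (x * xᴴ - y * yᴴ) ^ 2} := by
  rintro t ⟨x, h0, hlt, rfl⟩
  have hRpos : (0:ℝ) < R := lt_trans h0 hlt
  refine ⟨x, z, hlt, ?_, ?_, rfl⟩
  · rw [sub_self, frob_eq_zero_iff.mpr rfl]; exact hRpos
  · intro h; rw [sub_eq_zero.mpr h, frob_eq_zero_iff.mpr rfl] at h0; exact lt_irrefl 0 h0

lemma S2_subset_SG (R : ℝ) :
    {t : ℝ | ∃ x y : Matrix (Fin n) (Fin r) ℂ,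
      frob (x * xᴴ - z * zᴴ) < R ∧ frob (y * yᴴ - z * zᴴ) < R ∧ x * xᴴ ≠ y * yᴴ ∧
      t = (∑ j, rinner (x * xᴴ - y * yᴴ) (A j) ^ 2) / frob (x * xᴴ - y * yᴴ) ^ 2} ⊆
    {t : ℝ | ∃ x y : Matrix (Fin n) (Fin r) ℂ, x * xᴴ ≠ y * yᴴ ∧
      t = (∑ j, rinner (x * xᴴ - y * yᴴ) (A j) ^ 2) / frob (x * xᴴ - y * yᴴ) ^ 2} := by
  rintro t ⟨x, y, _, _, hne, rfl⟩
  exact ⟨x, y, hne, rfl⟩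

lemma SG_bddBelow :
    BddBelow {t : ℝ | ∃ x y : Matrix (Fin n) (Fin r) ℂ, x * xᴴ ≠ y * yᴴ ∧
      t = (∑ j, rinner (x * xᴴ - y * yᴴ) (A j) ^ 2) / frob (x * xᴴ - y * yᴴ) ^ 2} := by
  refine ⟨0, ?_⟩
  rintro t ⟨x, y, _, rfl⟩
  positivity

lemma S2_bddBelow (R : ℝ) :
    BddBelow {t : ℝ | ∃ x y : Matrix (Fin n) (Fin r) ℂ,
      frob (x * xᴴ - z * zᴴ) < R ∧ frob (y * yᴴ - z * zᴴ) < R ∧ x * xᴴ ≠ y * yᴴ ∧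
      t = (∑ j, rinner (x * xᴴ - y * yᴴ) (A j) ^ 2) / frob (x * xᴴ - y * yᴴ) ^ 2} := by
  refine ⟨0, ?_⟩
  rintro t ⟨x, y, _, _, _, rfl⟩
  positivity

lemma S1_nonempty' (hz : z ≠ 0) {R : ℝ} (hR : 0 < R) :
    Set.Nonempty {t : ℝ | ∃ x : Matrix (Fin n) (Fin r) ℂ,
      0 < frob (x * xᴴ - z * zᴴ) ∧ frob (x * xᴴ - z * zᴴ) < R ∧
      t = (∑ j, rinner (x * xᴴ - z * zᴴ) (A j) ^ 2) / frob (x * xᴴ - z * zᴴ) ^ 2} := by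
  obtain ⟨t, ht⟩ := S1_nonempty A hz hR
  exact ⟨t, ht⟩

-- upper bounds on the infima
lemma F1_le_C (hz : z ≠ 0) {R : ℝ} (hR : 0 < R) :
    sInf {t : ℝ | ∃ x : Matrix (Fin n) (Fin r) ℂ,
      0 < frob (x * xᴴ - z * zᴴ) ∧ frob (x * xᴴ - z * zᴴ) < R ∧
      t = (∑ j, rinner (x * xᴴ - z * zᴴ) (A j) ^ 2) / frob (x * xᴴ - z * zᴴ) ^ 2}
    ≤ ∑ j, frob (A j) ^ 2 := by
  obtain ⟨t, x, h0, hlt, rfl⟩ := S1_nonempty A hz hR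
  refine csInf_le_of_le ⟨0, ?_⟩ ⟨x, h0, hlt, rfl⟩ (quot_le_C A (ne_zero_of_frob_pos h0))
  rintro t ⟨x', _, _, rfl⟩
  positivity

lemma F2_le_C (hz : z ≠ 0) {R : ℝ} (hR : 0 < R) :
    sInf {t : ℝ | ∃ x y : Matrix (Fin n) (Fin r) ℂ,
      frob (x * xᴴ - z * zᴴ) < R ∧ frob (y * yᴴ - z * zᴴ) < R ∧ x * xᴴ ≠ y * yᴴ ∧
      t = (∑ j, rinner (x * xᴴ - y * yᴴ) (A j) ^ 2) / frob (x * xᴴ - y * yᴴ) ^ 2}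
    ≤ ∑ j, frob (A j) ^ 2 := by
  obtain ⟨t, x, h0, hlt, rfl⟩ := S1_nonempty A hz hR
  have hmem := S1_subset_S2 A z R ⟨x, h0, hlt, rfl⟩
  refine csInf_le_of_le (S2_bddBelow A z R) hmem (quot_le_C A (ne_zero_of_frob_pos h0))

lemma chain2 (hz : z ≠ 0) : aLoc2 A z ≤ aLoc1 A z := by
  unfold aLoc1 aLoc2
  apply ciSup_mono
  · refine ⟨∑ j, frob (A j) ^ 2, ?_⟩
    rintro t ⟨R, rfl⟩
    exact F1_le_C A z hz R.2
  · intro R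
    exact csInf_le_csInf (S2_bddBelow A z R.1) (S1_nonempty' A z hz R.2) (S1_subset_S2 A z R.1)

lemma chain1 (hz : z ≠ 0) : aGlobal r A ≤ aLoc2 A z := by
  unfold aGlobal aLoc2
  have step : ∀ R : {R : ℝ // 0 < R}, sInf {t : ℝ | ∃ x y : Matrix (Fin n) (Fin r) ℂ,
      x * xᴴ ≠ y * yᴴ ∧
      t = (∑ j, rinner (x * xᴴ - y * yᴴ) (A j) ^ 2) / frob (x * xᴴ - y * yᴴ) ^ 2} ≤
      sInf {t : ℝ | ∃ x y : Matrix (Fin n) (Fin r) ℂ,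
      frob (x * xᴴ - z * zᴴ) < R.1 ∧ frob (y * yᴴ - z * zᴴ) < R.1 ∧ x * xᴴ ≠ y * yᴴ ∧
      t = (∑ j, rinner (x * xᴴ - y * yᴴ) (A j) ^ 2) / frob (x * xᴴ - y * yᴴ) ^ 2} := by
    intro R
    apply csInf_le_csInf (SG_bddBelow A)
      ((S1_nonempty' A z hz R.2).mono (S1_subset_S2 A z R.1)) (S2_subset_SG A z R.1)
  have hb : BddAbove (Set.range fun R : {R : ℝ // 0 < R} =>
      sInf {t : ℝ | ∃ x y : Matrix (Fin n) (Fin r) ℂ,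
      frob (x * xᴴ - z * zᴴ) < R.1 ∧ frob (y * yᴴ - z * zᴴ) < R.1 ∧ x * xᴴ ≠ y * yᴴ ∧
      t = (∑ j, rinner (x * xᴴ - y * yᴴ) (A j) ^ 2) / frob (x * xᴴ - y * yᴴ) ^ 2}) := by
    refine ⟨∑ j, frob (A j) ^ 2, ?_⟩
    rintro t ⟨R, rfl⟩
    exact F2_le_C A z hz R.2
  exact le_trans (step ⟨1, one_pos⟩) (le_ciSup hb ⟨1, one_pos⟩)

lemma tangent_smul {z : Matrix (Fin n) (Fin r) ℂ} {W : Matrix (Fin n) (Fin n) ℂ}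
    (c : ℝ) (h : tangentCond z W) : tangentCond z ((c:ℂ) • W) := by
  obtain ⟨h1, h2⟩ := h
  constructor
  · rw [Matrix.conjTranspose_smul, Complex.star_def, Complex.conj_ofReal, h1]
  · intro u v hu hv
    rw [Matrix.smul_mulVec, dotProduct_smul, h2 u v hu hv, smul_zero]

lemma tangent_zzH (z : Matrix (Fin n) (Fin r) ℂ) : tangentCond z (z * zᴴ) := by
  constructor
  · rw [Matrix.conjTranspose_mul, Matrix.conjTranspose_conjTranspose]
  · intro u v _ hv
    rw [← Matrix.mulVec_mulVec, hv, Matrix.mulVec_zero, dotProduct_zero]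

lemma geo_nonempty {z : Matrix (Fin n) (Fin r) ℂ} (hz : z ≠ 0) :
    Set.Nonempty {t : ℝ | ∃ W : Matrix (Fin n) (Fin n) ℂ,
      tangentCond z W ∧ frob W = 1 ∧ t = ∑ j, rinner W (A j) ^ 2} := by
  have hzz : z * zᴴ ≠ 0 := fun h => hz (Matrix.self_mul_conjTranspose_eq_zero.mp h)
  have hpos := frob_pos hzz
  set c : ℝ := (frob (z * zᴴ))⁻¹ with hc
  refine ⟨_, (c:ℂ) • (z * zᴴ), tangent_smul c (tangent_zzH z), ?_, rfl⟩
  rw [frob_smul_real, hc, abs_of_pos (by positivity)]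
  field_simp

lemma chain3 (hz : z ≠ 0) : aLoc1 A z ≤ aGeo A z := by
  unfold aLoc1 aGeo
  apply ciSup_le
  intro R
  apply le_csInf (geo_nonempty A hz)
  rintro t ⟨W, hW, hW1, rfl⟩
  exact loc1_le_tangent A z W hW hW1 R.1 R.2

-- difference of rank-r grams is tangent at x - y
lemma dot_gram (M : Matrix (Fin n) (Fin r) ℂ) (u v : Fin n → ℂ) :
    star u ⬝ᵥ ((M * Mᴴ) *ᵥ v) = star (Mᴴ *ᵥ u) ⬝ᵥ (Mᴴ *ᵥ v) := by
  rw [← Matrix.mulVec_mulVec, Matrix.dotProduct_mulVec, Matrix.star_mulVec,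
    Matrix.conjTranspose_conjTranspose, Matrix.dotProduct_mulVec]

lemma tangent_diff (x y : Matrix (Fin n) (Fin r) ℂ) :
    tangentCond (x - y) (x * xᴴ - y * yᴴ) := by
  constructor
  · rw [Matrix.conjTranspose_sub, Matrix.conjTranspose_mul, Matrix.conjTranspose_mul,
      Matrix.conjTranspose_conjTranspose, Matrix.conjTranspose_conjTranspose]
  · intro u v hu hv
    have hsub : ∀ w : Fin n → ℂ, (x - y)ᴴ *ᵥ w = 0 → xᴴ *ᵥ w = yᴴ *ᵥ w := by
      intro w hw
      rw [Matrix.conjTranspose_sub, Matrix.sub_mulVec] at hw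
      exact sub_eq_zero.mp hw
    rw [Matrix.sub_mulVec, dotProduct_sub, dot_gram, dot_gram,
      hsub u hu, hsub v hv, sub_self]

lemma geo_bddBelow (z : Matrix (Fin n) (Fin r) ℂ) :
    BddBelow {t : ℝ | ∃ W : Matrix (Fin n) (Fin n) ℂ,
      tangentCond z W ∧ frob W = 1 ∧ t = ∑ j, rinner W (A j) ^ 2} := by
  refine ⟨0, ?_⟩
  rintro t ⟨W, _, _, rfl⟩
  positivity

lemma aGeo_le_quot {x y : Matrix (Fin n) (Fin r) ℂ} (hne : x * xᴴ ≠ y * yᴴ) :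
    aGeo A (x - y) ≤ (∑ j, rinner (x * xᴴ - y * yᴴ) (A j) ^ 2) /
      frob (x * xᴴ - y * yᴴ) ^ 2 := by
  unfold aGeo
  set D := x * xᴴ - y * yᴴ with hD
  have hDne : D ≠ 0 := sub_ne_zero.mpr hne
  have hDpos := frob_pos hDne
  set c : ℝ := (frob D)⁻¹ with hc
  have hcpos : 0 < c := by positivity
  have hmem : (∑ j, rinner ((c:ℂ) • D) (A j) ^ 2) ∈ {t : ℝ | ∃ W : Matrix (Fin n) (Fin n) ℂ,
      tangentCond (x - y) W ∧ frob W = 1 ∧ t = ∑ j, rinner W (A j) ^ 2} := by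
    refine ⟨(c:ℂ) • D, tangent_smul c (tangent_diff x y), ?_, rfl⟩
    rw [frob_smul_real, abs_of_pos hcpos, hc]
    field_simp
  refine le_trans (csInf_le (geo_bddBelow A (x - y)) hmem) (le_of_eq ?_)
  have : ∀ j, rinner ((c:ℂ) • D) (A j) = c * rinner D (A j) := fun j => rinner_smul_real c _ _
  simp_rw [this, mul_pow, ← Finset.mul_sum]
  rw [hc, div_eq_mul_inv, mul_comm]
  congr 1
  rw [← inv_pow]

lemma SG_nonempty (hr : 1 ≤ r) (hrn : r ≤ n) :
    Set.Nonempty {t : ℝ | ∃ x y : Matrix (Fin n) (Fin r) ℂ, x * xᴴ ≠ y * yᴴ ∧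
      t = (∑ j, rinner (x * xᴴ - y * yᴴ) (A j) ^ 2) / frob (x * xᴴ - y * yᴴ) ^ 2} := by
  have hn : 0 < n := lt_of_lt_of_le hr hrn
  set x : Matrix (Fin n) (Fin r) ℂ := Matrix.of fun _ _ => 1 with hx
  refine ⟨_, x, 0, ?_, rfl⟩
  intro h
  have h0 := congrFun (congrFun h ⟨0, hn⟩) ⟨0, hn⟩
  simp [hx, Matrix.mul_apply, Matrix.conjTranspose_apply] at h0
  omega

lemma geoSet_nonempty (hr : 1 ≤ r) (hrn : r ≤ n) :
    Set.Nonempty {t : ℝ | ∃ z : Matrix (Fin n) (Fin r) ℂ, z ≠ 0 ∧ t = aGeo A z} := by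
  have hn : 0 < n := lt_of_lt_of_le hr hrn
  have hr0 : 0 < r := hr
  refine ⟨_, Matrix.of fun _ _ => (1:ℂ), ?_, rfl⟩
  intro h
  have h0 := congrFun (congrFun h ⟨0, hn⟩) ⟨0, hr0⟩
  simp at h0

lemma aGeo_nonneg (z : Matrix (Fin n) (Fin r) ℂ) : 0 ≤ aGeo A z := by
  apply Real.sInf_nonneg
  rintro t ⟨W, _, _, rfl⟩
  positivity


end chains

/-- `a₀ ≤ a₂(z) ≤ a₁(z) ≤ a(z)` for every `z ≠ 0`, and
`a₀ = inf_{z ≠ 0} a(z)`. -/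
theorem a0_squeeze_and_inf (n r m : ℕ) (hr : 1 ≤ r) (hnr : r ≤ n)
    (A : Fin m → Matrix (Fin n) (Fin n) ℂ) (hA : ∀ j, (A j).IsHermitian) :
    (∀ z : Matrix (Fin n) (Fin r) ℂ, z ≠ 0 →
      aGlobal r A ≤ aLoc2 A z ∧
      aLoc2 A z ≤ aLoc1 A z ∧ aLoc1 A z ≤ aGeo A z) ∧
    aGlobal r A =
      sInf {t : ℝ | ∃ z : Matrix (Fin n) (Fin r) ℂ, z ≠ 0 ∧ t = aGeo A z} := by
  constructor
  · intro z hz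
    exact ⟨chain1 A z hz, chain2 A z hz, chain3 A z hz⟩
  · apply le_antisymm
    · apply le_csInf (geoSet_nonempty A hr hnr)
      rintro t ⟨z, hz, rfl⟩
      exact le_trans (chain1 A z hz) (le_trans (chain2 A z hz) (chain3 A z hz))
    · apply le_csInf (SG_nonempty A hr hnr)
      rintro t ⟨x, y, hne, rfl⟩
      have hbdd : BddBelow {t : ℝ | ∃ z : Matrix (Fin n) (Fin r) ℂ, z ≠ 0 ∧ t = aGeo A z} := by
        refine ⟨0, ?_⟩
        rintro t ⟨z', _, rfl⟩
        exact aGeo_nonneg A z'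
      have hxyne : x - y ≠ 0 := by
        intro e
        exact hne (by rw [sub_eq_zero.mp e])
      exact le_trans (csInf_le hbdd ⟨x - y, hxyne, rfl⟩) (aGeo_le_quot A hne)
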